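/- Let G be a graph and u a vertex of degree 2 with incident edges e = uv and f = uw. If S is a minimal matching planarizing set of G (i.e., a matching whose contraction yields a planar graph, minimal under inclusion), then S contains neither e nor f. -/

import Mathlib

open SimpleGraph

namespace Contractibility

variable {V W : Type*}

/-- The setoid on vertices generated by identifying endpoints of edges in `S`. -/
def contractSetoid (S : Set (Sym2 V)) : Setoid V :=
  ⟨Relation.EqvGen (fun a b => s(a, b) ∈ S), Relation.EqvGen.is_equivalence _⟩

/-- The graph obtained from `G` by contracting all edges of `S`
(loops and parallel edges discarded). -/
def contract (G : SimpleGraph V) (S : Set (Sym2 V)) :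
    SimpleGraph (Quotient (contractSetoid S)) :=
  SimpleGraph.fromRel (fun x y => ∃ a b : V, G.Adj a b ∧
    Quotient.mk (contractSetoid S) a = x ∧ Quotient.mk (contractSetoid S) b = y)

/-- `H` is a minor of `G`: branch-set definition. -/
def HasMinor (G : SimpleGraph V) (H : SimpleGraph W) : Prop :=
  ∃ f : W → Set V,
    (∀ w, (f w).Nonempty) ∧
    (∀ w, (G.induce (f w)).Connected) ∧
    (∀ w₁ w₂, w₁ ≠ w₂ → Disjoint (f w₁) (f w₂)) ∧
    (∀ w₁ w₂, H.Adj w₁ w₂ → ∃ u ∈ f w₁, ∃ v ∈ f w₂, G.Adj u v)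

/-- Planarity, via Wagner's theorem: no `K₅` and no `K₃,₃` minor. -/
def Planar (G : SimpleGraph V) : Prop :=
  ¬ HasMinor G (completeGraph (Fin 5)) ∧
  ¬ HasMinor G (completeBipartiteGraph (Fin 3) (Fin 3))

/-- `S` is a matching in `G`: edges of `G`, pairwise non-adjacent. -/
def IsMatching (G : SimpleGraph V) (S : Set (Sym2 V)) : Prop :=
  S ⊆ G.edgeSet ∧ ∀ e ∈ S, ∀ f ∈ S, e ≠ f → ∀ v : V, v ∈ e → v ∉ f

/-- `S` is a matching planarizing set of `G`. -/
def MatchingPlanarizing (G : SimpleGraph V) (S : Set (Sym2 V)) : Prop :=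
  IsMatching G S ∧ Planar (contract G S)

section Aux

lemma reachable_collapse {α β : Type*} {G : SimpleGraph α} {H : SimpleGraph β} (φ : α → β)
    (h : ∀ a b, G.Adj a b → H.Adj (φ a) (φ b) ∨ φ a = φ b) {x y : α}
    (hr : G.Reachable x y) : H.Reachable (φ x) (φ y) := by
  obtain ⟨p⟩ := hr
  induction p with
  | nil => exact Reachable.refl _
  | cons h' p ih =>
    rcases h _ _ h' with h'' | h''
    · exact h''.reachable.trans ih
    · rwa [h'']

lemma exists_adj_of_reachable {α : Type*} {G : SimpleGraph α} {x y : α} (hxy : x ≠ y)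
    (h : G.Reachable x y) : ∃ z, G.Adj x z := by
  obtain ⟨p⟩ := h
  cases p with
  | nil => exact absurd rfl hxy
  | cons h' _ => exact ⟨_, h'⟩

lemma connected_transfer {α β : Type*} {G : SimpleGraph α} {H : SimpleGraph β}
    {A : Set α} {B : Set β} (φ : α → β)
    (hmaps : ∀ a ∈ A, φ a ∈ B)
    (hsurj : ∀ b ∈ B, ∃ a ∈ A, φ a = b)
    (hadj : ∀ a ∈ A, ∀ a' ∈ A, G.Adj a a' → H.Adj (φ a) (φ a') ∨ φ a = φ a')
    (hB : B.Nonempty)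
    (hconn : (G.induce A).Connected) : (H.induce B).Connected := by
  rw [connected_iff]
  refine ⟨?_, ⟨⟨hB.choose, hB.choose_spec⟩⟩⟩
  rintro ⟨b₁, hb₁⟩ ⟨b₂, hb₂⟩
  obtain ⟨a₁, ha₁, rfl⟩ := hsurj b₁ hb₁
  obtain ⟨a₂, ha₂, rfl⟩ := hsurj b₂ hb₂
  have hre := hconn.preconnected ⟨a₁, ha₁⟩ ⟨a₂, ha₂⟩
  exact reachable_collapse (fun p : A => (⟨φ p.1, hmaps p.1 p.2⟩ : B))
    (fun p q hpq => by
      rcases hadj p.1 p.2 q.1 q.2 hpq with h | h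
      · exact Or.inl h
      · exact Or.inr (Subtype.ext h)) hre

lemma eqv_iff {G : SimpleGraph V} {S : Set (Sym2 V)} (hM : IsMatching G S) (a b : V) :
    Relation.EqvGen (fun x y => s(x, y) ∈ S) a b ↔ a = b ∨ s(a, b) ∈ S := by
  constructor
  · intro h
    induction h with
    | rel x y h => exact Or.inr h
    | refl x => exact Or.inl rfl
    | symm x y _ ih =>
      rcases ih with rfl | h
      · exact Or.inl rfl
      · exact Or.inr (Sym2.eq_swap ▸ h)
    | trans x y z _ _ ih₁ ih₂ =>
      rcases ih₁ with rfl | h₁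
      · exact ih₂
      · rcases ih₂ with rfl | h₂
        · exact Or.inr h₁
        · by_cases hxy : s(x, y) = s(y, z)
          · rw [Sym2.eq_iff] at hxy
            rcases hxy with ⟨h1, h2⟩ | ⟨h1, -⟩
            · exact Or.inl (h1.trans h2)
            · exact Or.inl h1
          · exact absurd (Sym2.mem_mk_left y z)
              (hM.2 _ h₁ _ h₂ hxy y (Sym2.mem_mk_right x y))
  · rintro (rfl | h)
    · exact Relation.EqvGen.refl a
    · exact Relation.EqvGen.rel a b h

lemma isMatching_diff {G : SimpleGraph V} {S : Set (Sym2 V)} (hM : IsMatching G S)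
    (T : Set (Sym2 V)) : IsMatching G (S \ T) :=
  ⟨fun e he => hM.1 he.1, fun e he f hf hef v hv => hM.2 e he.1 f hf.1 hef v hv⟩

lemma deg5 : ∀ w₀ : Fin 5, ∃ w₁ w₂ w₃ : Fin 5, w₁ ≠ w₂ ∧ w₁ ≠ w₃ ∧ w₂ ≠ w₃ ∧
    (completeGraph (Fin 5)).Adj w₀ w₁ ∧ (completeGraph (Fin 5)).Adj w₀ w₂ ∧
    (completeGraph (Fin 5)).Adj w₀ w₃ := by
  simp only [completeGraph, top_adj]
  decide

lemma deg33 : ∀ w₀ : Fin 3 ⊕ Fin 3, ∃ w₁ w₂ w₃ : Fin 3 ⊕ Fin 3,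
    w₁ ≠ w₂ ∧ w₁ ≠ w₃ ∧ w₂ ≠ w₃ ∧
    (completeBipartiteGraph (Fin 3) (Fin 3)).Adj w₀ w₁ ∧
    (completeBipartiteGraph (Fin 3) (Fin 3)).Adj w₀ w₂ ∧
    (completeBipartiteGraph (Fin 3) (Fin 3)).Adj w₀ w₃ := by
  rintro (i | i)
  · exact ⟨Sum.inr 0, Sum.inr 1, Sum.inr 2, by simp, by simp, by simp,
      Or.inl ⟨rfl, rfl⟩, Or.inl ⟨rfl, rfl⟩, Or.inl ⟨rfl, rfl⟩⟩
  · exact ⟨Sum.inl 0, Sum.inl 1, Sum.inl 2, by simp, by simp, by simp,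
      Or.inr ⟨rfl, rfl⟩, Or.inr ⟨rfl, rfl⟩, Or.inr ⟨rfl, rfl⟩⟩

lemma transfer {W' : Type*} (H : SimpleGraph W')
    (hdeg : ∀ w₀ : W', ∃ w₁ w₂ w₃ : W', w₁ ≠ w₂ ∧ w₁ ≠ w₃ ∧ w₂ ≠ w₃ ∧
      H.Adj w₀ w₁ ∧ H.Adj w₀ w₂ ∧ H.Adj w₀ w₃)
    (G : SimpleGraph V) (u v w : V) (hvw : v ≠ w)
    (hnb : G.neighborSet u = {v, w})
    (S : Set (Sym2 V)) (hM : IsMatching G S) (he : s(u, v) ∈ S)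
    (hH : HasMinor (contract G (S \ {s(u, v)})) H) :
    HasMinor (contract G S) H := by
  classical
  set S' : Set (Sym2 V) := S \ {s(u, v)} with hS'
  have hM' : IsMatching G S' := isMatching_diff hM _
  have huv : G.Adj u v := by
    have : v ∈ G.neighborSet u := by rw [hnb]; exact Set.mem_insert _ _
    exact this
  have huw : G.Adj u w := by
    have : w ∈ G.neighborSet u := by rw [hnb]; exact Set.mem_insert_iff.mpr (Or.inr rfl)
    exact this
  have huvne : u ≠ v := huv.ne
  have huwne : u ≠ w := huw.ne
  have hedne : s(u, v) ≠ s(u, w) := by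
    intro h
    rw [Sym2.eq_iff] at h
    rcases h with ⟨-, h⟩ | ⟨h, -⟩
    · exact hvw h
    · exact huwne h
  have hedne2 : s(u, v) ≠ s(v, w) := by
    intro h
    rw [Sym2.eq_iff] at h
    rcases h with ⟨h1, -⟩ | ⟨h1, -⟩
    · exact huvne h1
    · exact huwne h1
  have huwS : s(u, w) ∉ S := fun h =>
    hM.2 _ he _ h hedne u (Sym2.mem_mk_left u v) (Sym2.mem_mk_left u w)
  have hvwS : s(v, w) ∉ S := fun h =>
    hM.2 _ he _ h hedne2 v (Sym2.mem_mk_right u v) (Sym2.mem_mk_left v w)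
  -- the projection between the two quotients
  let mk' : V → Quotient (contractSetoid S') := Quotient.mk (contractSetoid S')
  let mk : V → Quotient (contractSetoid S) := Quotient.mk (contractSetoid S)
  let π : Quotient (contractSetoid S') → Quotient (contractSetoid S) :=
    Quotient.map id (fun a b h => Relation.EqvGen.mono (fun x y (hxy : s(x, y) ∈ S') => hxy.1) a b h)
  have hπmk : ∀ a : V, π (mk' a) = mk a := fun a => rfl
  have classu : ∀ a : V, mk' a = mk' u → a = u := by
    intro a h
    have := Quotient.exact h
    rcases (eqv_iff hM' a u).mp this with h' | h'
    · exact h'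
    · exact absurd (Sym2.mem_mk_right a u)
        (hM.2 _ he _ h'.1 (fun hh => h'.2 hh.symm) u (Sym2.mem_mk_left u v))
  have hπinj : ∀ x y : Quotient (contractSetoid S'), π x = π y →
      x = y ∨ (x = mk' u ∧ y = mk' v) ∨ (x = mk' v ∧ y = mk' u) := by
    intro x y
    induction x using Quotient.inductionOn with | h a =>
    induction y using Quotient.inductionOn with | h b =>
    intro h
    have hab : Relation.EqvGen (fun x y => s(x, y) ∈ S) a b := Quotient.exact h
    rcases (eqv_iff hM a b).mp hab with rfl | h'
    · exact Or.inl rfl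
    · by_cases hh : s(a, b) = s(u, v)
      · rw [Sym2.eq_iff] at hh
        rcases hh with ⟨h1, h2⟩ | ⟨h1, h2⟩
        · exact Or.inr (Or.inl ⟨by rw [h1], by rw [h2]⟩)
        · exact Or.inr (Or.inr ⟨by rw [h1], by rw [h2]⟩)
      · exact Or.inl (Quotient.sound (Relation.EqvGen.rel a b ⟨h', hh⟩))
  have hadjc : ∀ (T : Set (Sym2 V)) (x y : Quotient (contractSetoid T)),
      (contract G T).Adj x y ↔ x ≠ y ∧ ∃ a b : V, G.Adj a b ∧
        Quotient.mk (contractSetoid T) a = x ∧ Quotient.mk (contractSetoid T) b = y := by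
    intro T x y
    constructor
    · rintro ⟨hne, h | h⟩
      · exact ⟨hne, h⟩
      · obtain ⟨a, b, hab, ha, hb⟩ := h
        exact ⟨hne, b, a, hab.symm, hb, ha⟩
    · rintro ⟨hne, h⟩
      exact ⟨hne, Or.inl h⟩
  have hcol : ∀ x y, (contract G S').Adj x y →
      (contract G S).Adj (π x) (π y) ∨ π x = π y := by
    intro x y hxy
    rw [hadjc] at hxy
    obtain ⟨hne, a, b, hab, hax, hby⟩ := hxy
    by_cases hπ : π x = π y
    · exact Or.inr hπ
    · subst hax; subst hby
      exact Or.inl ((hadjc S _ _).mpr ⟨hπ, a, b, hab, rfl, rfl⟩)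
  have hnbr : ∀ y, (contract G S').Adj (mk' u) y → y = mk' v ∨ y = mk' w := by
    intro y h
    rw [hadjc] at h
    obtain ⟨hne, a, b, hab, ha, hb⟩ := h
    have ha' : a = u := classu a ha
    subst ha'
    have : b ∈ G.neighborSet a := hab
    rw [hnb] at this
    rcases this with rfl | rfl
    · exact Or.inl hb.symm
    · exact Or.inr hb.symm
  obtain ⟨f, hfne, hfconn, hfdisj, hfadj⟩ := hH
  have huniq : ∀ (z : Quotient (contractSetoid S')) w₁ w₂, z ∈ f w₁ → z ∈ f w₂ →
      w₁ = w₂ := by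
    intro z w₁ w₂ h1 h2
    by_contra hne'
    exact Set.disjoint_left.mp (hfdisj _ _ hne') h1 h2
  have hnotsingle : ∀ w₀, f w₀ ≠ {mk' u} := by
    intro w₀ hfw
    obtain ⟨w₁, w₂, w₃, h12, h13, h23, ha1, ha2, ha3⟩ := hdeg w₀
    have key : ∀ w', H.Adj w₀ w' → mk' v ∈ f w' ∨ mk' w ∈ f w' := by
      intro w' hw'
      obtain ⟨x, hx, y, hy, hxy⟩ := hfadj w₀ w' hw'
      rw [hfw] at hx
      rcases hnbr y (by rwa [Set.mem_singleton_iff.mp hx] at hxy) with rfl | rfl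
      · exact Or.inl hy
      · exact Or.inr hy
    rcases key w₁ ha1 with h1 | h1 <;> rcases key w₂ ha2 with h2 | h2 <;>
      rcases key w₃ ha3 with h3 | h3
    · exact h12 (huniq _ _ _ h1 h2)
    · exact h12 (huniq _ _ _ h1 h2)
    · exact h13 (huniq _ _ _ h1 h3)
    · exact h23 (huniq _ _ _ h2 h3)
    · exact h23 (huniq _ _ _ h2 h3)
    · exact h13 (huniq _ _ _ h1 h3)
    · exact h12 (huniq _ _ _ h1 h2)
    · exact h12 (huniq _ _ _ h1 h2)
  by_cases hcaseB : ∃ w₀, mk' u ∈ f w₀ ∧ mk' v ∈ f w₀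
  · -- Case B : u's class and v's class lie in the same branch set
    obtain ⟨w₀, hu0, hv0⟩ := hcaseB
    refine ⟨fun w' => π '' f w', fun w' => (hfne w').image _, ?_, ?_, ?_⟩
    · intro w'
      refine connected_transfer π (fun a ha => Set.mem_image_of_mem _ ha) ?_
        (fun a _ a' _ hA => hcol a a' hA) ((hfne w').image _) (hfconn w')
      rintro b ⟨a, ha, rfl⟩
      exact ⟨a, ha, rfl⟩
    · intro w₁ w₂ hww
      rw [Set.disjoint_left]
      rintro b ⟨a₁, ha₁, rfl⟩ ⟨a₂, ha₂, hπa⟩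
      rcases hπinj a₂ a₁ hπa with rfl | ⟨h2u, h1v⟩ | ⟨h2v, h1u⟩
      · exact hww (huniq _ _ _ ha₁ ha₂)
      · rw [h2u] at ha₂; rw [h1v] at ha₁
        exact hww ((huniq _ _ _ ha₁ hv0).trans (huniq _ _ _ hu0 ha₂))
      · rw [h2v] at ha₂; rw [h1u] at ha₁
        exact hww ((huniq _ _ _ ha₁ hu0).trans (huniq _ _ _ hv0 ha₂))
    · intro w₁ w₂ hA
      obtain ⟨x, hx, y, hy, hxy⟩ := hfadj w₁ w₂ hA
      rcases hcol x y hxy with h | h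
      · exact ⟨π x, Set.mem_image_of_mem _ hx, π y, Set.mem_image_of_mem _ hy, h⟩
      · exfalso
        rcases hπinj x y h with rfl | ⟨h1, h2⟩ | ⟨h1, h2⟩
        · exact hxy.ne rfl
        · rw [h1] at hx; rw [h2] at hy
          exact hA.ne ((huniq _ _ _ hx hu0).trans (huniq _ _ _ hv0 hy))
        · rw [h1] at hx; rw [h2] at hy
          exact hA.ne ((huniq _ _ _ hx hv0).trans (huniq _ _ _ hu0 hy))
  · -- Case AC : no branch set contains both u's and v's classes
    have hcase : ∀ w₀, mk' u ∈ f w₀ → mk' v ∉ f w₀ := by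
      intro w₀ h1 h2; exact hcaseB ⟨w₀, h1, h2⟩
    have hwneu : mk' w ≠ mk' u := fun h => huwne (classu w h).symm
    have hvneu : mk' v ≠ mk' u := fun h => huvne (classu v h).symm
    have hwin : ∀ w₀, mk' u ∈ f w₀ → mk' w ∈ f w₀ := by
      intro w₀ hu0
      have hz : ∃ z ∈ f w₀, z ≠ mk' u := by
        by_contra h
        push_neg at h
        exact hnotsingle w₀ (Set.eq_singleton_iff_unique_mem.mpr ⟨hu0, h⟩)
      obtain ⟨z, hz0, hzne⟩ := hz
      have hre := (hfconn w₀).preconnected ⟨mk' u, hu0⟩ ⟨z, hz0⟩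
      obtain ⟨n, hn⟩ := exists_adj_of_reachable
        (fun hEq => hzne (congrArg Subtype.val hEq).symm) hre
      have hnadj : (contract G S').Adj (mk' u) n.1 := hn
      rcases hnbr n.1 hnadj with h | h
      · exact absurd (h ▸ n.2) (hcase w₀ hu0)
      · exact h ▸ n.2
    have hgne : ∀ w', (π '' (f w' \ {mk' u})).Nonempty := by
      intro w'
      by_cases hu' : mk' u ∈ f w'
      · exact ⟨π (mk' w), ⟨mk' w, ⟨hwin w' hu', hwneu⟩, rfl⟩⟩
      · obtain ⟨z, hz⟩ := hfne w'
        exact ⟨π z, ⟨z, ⟨hz, fun h => hu' (h ▸ hz)⟩, rfl⟩⟩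
    refine ⟨fun w' => π '' (f w' \ {mk' u}), hgne, ?_, ?_, ?_⟩
    · intro w'
      refine connected_transfer (fun x => if x = mk' u then π (mk' w) else π x)
        ?_ ?_ ?_ (hgne w') (hfconn w')
      · intro a ha
        by_cases h : a = mk' u
        · simp only [if_pos h]
          exact ⟨mk' w, ⟨hwin w' (h ▸ ha), hwneu⟩, rfl⟩
        · simp only [if_neg h]
          exact ⟨a, ⟨ha, h⟩, rfl⟩
      · rintro b ⟨a, ⟨ha, hne'⟩, rfl⟩
        exact ⟨a, ha, if_neg hne'⟩
      · intro a ha a' ha' hA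
        by_cases h1 : a = mk' u
        · rcases hnbr a' (h1 ▸ hA) with h | h
          · exact absurd (h ▸ ha') (hcase w' (h1 ▸ ha))
          · right
            simp only [if_pos h1, h, if_neg hwneu]
        · by_cases h2 : a' = mk' u
          · rcases hnbr a ((h2 ▸ hA).symm) with h | h
            · exact absurd (h ▸ ha) (hcase w' (h2 ▸ ha'))
            · right
              simp only [if_pos h2, h, if_neg hwneu]
          · simp only [if_neg h1, if_neg h2]
            rcases hcol a a' hA with h | h
            · exact Or.inl h
            · rcases hπinj a a' h with rfl | ⟨hh, -⟩ | ⟨-, hh⟩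
              · exact absurd rfl hA.ne
              · exact absurd hh h1
              · exact absurd hh h2
    · intro w₁ w₂ hww
      rw [Set.disjoint_left]
      rintro b ⟨a₁, ⟨ha₁, hne₁⟩, rfl⟩ ⟨a₂, ⟨ha₂, hne₂⟩, hπa⟩
      rcases hπinj a₂ a₁ hπa with rfl | ⟨hh, -⟩ | ⟨-, hh⟩
      · exact hww (huniq _ _ _ ha₁ ha₂)
      · exact hne₂ hh
      · exact hne₁ hh
    · have aux : ∀ w₁ w₂, H.Adj w₁ w₂ → ∀ x y, x ∈ f w₁ → y ∈ f w₂ →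
          (contract G S').Adj x y → y ≠ mk' u →
          ∃ a ∈ π '' (f w₁ \ {mk' u}), ∃ b ∈ π '' (f w₂ \ {mk' u}),
            (contract G S).Adj a b := by
        intro w₁ w₂ hA x y hx hy hxy hyne
        by_cases hxu : x = mk' u
        · rcases hnbr y (hxu ▸ hxy) with h | h
          · -- y is v's class : connect through the contracted vertex
            refine ⟨π (mk' w), ⟨mk' w, ⟨hwin w₁ (hxu ▸ hx), hwneu⟩, rfl⟩,
              π (mk' v), ⟨mk' v, ⟨h ▸ hy, hvneu⟩, rfl⟩, ?_⟩
            refine (hadjc S _ _).mpr ⟨?_, w, u, huw.symm, rfl, Quotient.sound (Relation.EqvGen.rel u v he)⟩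
            intro hwv
            rcases (eqv_iff hM w v).mp (Quotient.exact hwv) with h' | h'
            · exact hvw h'.symm
            · exact hvwS (Sym2.eq_swap ▸ h')
          · exact absurd (huniq _ _ _ (hwin w₁ (hxu ▸ hx)) (h ▸ hy)) hA.ne
        · rcases hcol x y hxy with h | h
          · exact ⟨π x, ⟨x, ⟨hx, hxu⟩, rfl⟩, π y, ⟨y, ⟨hy, hyne⟩, rfl⟩, h⟩
          · exfalso
            rcases hπinj x y h with rfl | ⟨hh, -⟩ | ⟨-, hh⟩
            · exact hxy.ne rfl
            · exact hxu hh
            · exact hyne hh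
      intro w₁ w₂ hA
      obtain ⟨x, hx, y, hy, hxy⟩ := hfadj w₁ w₂ hA
      by_cases hyu : y = mk' u
      · have hxne : x ≠ mk' u := fun h => hxy.ne (h.trans hyu.symm)
        obtain ⟨a, ha, b, hb, hab⟩ := aux w₂ w₁ hA.symm y x hy hx hxy.symm hxne
        exact ⟨b, hb, a, ha, hab.symm⟩
      · exact aux w₁ w₂ hA x y hx hy hxy hyu

lemma key_lemma (G : SimpleGraph V) (u v w : V) (hvw : v ≠ w)
    (hnb : G.neighborSet u = {v, w}) (S : Set (Sym2 V))
    (hS : MatchingPlanarizing G S) (he : s(u, v) ∈ S) :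
    MatchingPlanarizing G (S \ {s(u, v)}) := by
  obtain ⟨hM, hP1, hP2⟩ := hS
  refine ⟨isMatching_diff hM _, ?_, ?_⟩
  · intro h; exact hP1 (transfer _ deg5 G u v w hvw hnb S hM he h)
  · intro h; exact hP2 (transfer _ deg33 G u v w hvw hnb S hM he h)

end Aux

/-- A minimal matching planarizing set contains no edge incident to a
degree-2 vertex `u` with neighbors `v`, `w`. -/
theorem stmt0 {V : Type*} (G : SimpleGraph V) (u v w : V) (hvw : v ≠ w)
    (hnb : G.neighborSet u = {v, w})
    (S : Set (Sym2 V))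
    (hS : MatchingPlanarizing G S)
    (hmin : ∀ S' ⊂ S, ¬ MatchingPlanarizing G S') :
    s(u, v) ∉ S ∧ s(u, w) ∉ S := by
  constructor
  · intro he
    exact hmin _ (Set.sdiff_singleton_ssubset.mpr he)
      (key_lemma G u v w hvw hnb S hS he)
  · intro hf
    exact hmin _ (Set.sdiff_singleton_ssubset.mpr hf)
      (key_lemma G u w v hvw.symm (by rw [hnb]; exact Set.pair_comm v w) S hS hf)

end Contractibility
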